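/- Let p be a real number with |p| < 1, let d be a natural number, let f and c₀, …, c_d be real numbers (the scalars N_iF for a univariate attack), and suppose ∑_{i=0}^{d} c_i = -1. Define the operator Δ_p on real sequences by (Δ_p u)(k) := u(k+1) - p * u(k). If r : ℕ → ℝ satisfies (Δ_p^[d] r)(k) = -(1-p)^d * (∑_{i=0}^{d} c_i) * f for all k ∈ ℕ, then r converges to f. -/

import Mathlib

open Filter Topology Finset

private lemma key_tendsto (p : ℝ) (hp : |p| < 1) (u : ℕ → ℝ) (L : ℝ)
    (h : Tendsto (fun k => u (k + 1) - p * u k) atTop (nhds L)) :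
    Tendsto u atTop (nhds (L / (1 - p))) := by
  have h1p : (0:ℝ) < 1 - |p| := by linarith
  have hne : (1:ℝ) - p ≠ 0 := by
    have h2 := (abs_lt.mp hp).2
    intro hcon; linarith
  set M := L / (1 - p) with hMdef
  have hM : M * (1 - p) = L := div_mul_cancel₀ L hne
  set v : ℕ → ℝ := fun k => u k - M with hvdef
  have hv : Tendsto (fun k => v (k + 1) - p * v k) atTop (nhds 0) := by
    have heq : (fun k => v (k + 1) - p * v k)
        = fun k => (u (k + 1) - p * u k) - L := by
      funext k
      simp only [hvdef]
      linear_combination -hM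
    rw [heq]
    simpa using h.sub_const L
  have hv0 : Tendsto v atTop (nhds 0) := by
    rw [Metric.tendsto_atTop]
    intro ε hε
    set δ := ε * (1 - |p|) / 2 with hδdef
    have hδ : 0 < δ := by positivity
    obtain ⟨N, hN⟩ := Metric.tendsto_atTop.mp hv δ hδ
    have key : ∀ m : ℕ, |v (N + m)| ≤ |p| ^ m * |v N| + δ / (1 - |p|) := by
      intro m
      induction m with
      | zero =>
        simp only [Nat.add_zero, pow_zero, one_mul]
        have : 0 ≤ δ / (1 - |p|) := by positivity
        linarith
      | succ m ih =>
        have he : |v (N + m + 1) - p * v (N + m)| < δ := by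
          have := hN (N + m) (Nat.le_add_right N m)
          simpa [Real.dist_eq] using this
        have hstep : |v (N + m + 1)| ≤ |p| * |v (N + m)| + δ := by
          calc |v (N + m + 1)|
              = |p * v (N + m) + (v (N + m + 1) - p * v (N + m))| := by ring_nf
            _ ≤ |p * v (N + m)| + |v (N + m + 1) - p * v (N + m)| := abs_add_le _ _
            _ ≤ |p| * |v (N + m)| + δ := by rw [abs_mul]; linarith
        have hrec : |p| * δ / (1 - |p|) + δ = δ / (1 - |p|) := by
          field_simp
          ring
        calc |v (N + (m + 1))| = |v (N + m + 1)| := by ring_nf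
          _ ≤ |p| * |v (N + m)| + δ := hstep
          _ ≤ |p| * (|p| ^ m * |v N| + δ / (1 - |p|)) + δ := by
              nlinarith [abs_nonneg p, abs_nonneg (v (N + m))]
          _ = |p| ^ (m + 1) * |v N| + (|p| * δ / (1 - |p|) + δ) := by ring
          _ = |p| ^ (m + 1) * |v N| + δ / (1 - |p|) := by rw [hrec]
    have hgeo : Tendsto (fun m : ℕ => |p| ^ m * |v N|) atTop (nhds 0) := by
      simpa using
        (tendsto_pow_atTop_nhds_zero_of_lt_one (abs_nonneg p) hp).mul_const (|v N|)
    obtain ⟨M₂, hM₂⟩ := Metric.tendsto_atTop.mp hgeo (ε / 2) (by linarith)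
    refine ⟨N + M₂, fun n hn => ?_⟩
    have hn' : n = N + (n - N) := by omega
    have hm : M₂ ≤ n - N := by omega
    have h1 := key (n - N)
    have h2 := hM₂ (n - N) hm
    rw [Real.dist_eq, sub_zero] at h2
    have habs : |p| ^ (n - N) * |v N| < ε / 2 :=
      lt_of_le_of_lt (le_abs_self _) h2
    have hδhalf : δ / (1 - |p|) = ε / 2 := by
      rw [hδdef]; field_simp
    rw [Real.dist_eq, sub_zero]
    calc |v n| = |v (N + (n - N))| := by rw [← hn']
      _ ≤ |p| ^ (n - N) * |v N| + δ / (1 - |p|) := h1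
      _ < ε / 2 + ε / 2 := by rw [hδhalf]; linarith
      _ = ε := by ring
  have := hv0.add_const M
  simpa [hvdef] using this

private lemma iter_tendsto (p : ℝ) (hp : |p| < 1) (Δ : (ℕ → ℝ) → (ℕ → ℝ))
    (hΔ : Δ = fun u k => u (k + 1) - p * u k) :
    ∀ (d : ℕ) (u : ℕ → ℝ) (L : ℝ), Tendsto (Δ^[d] u) atTop (nhds L) →
      Tendsto u atTop (nhds (L / (1 - p) ^ d)) := by
  intro d
  induction d with
  | zero => intro u L h; simpa using h
  | succ d ih =>
    intro u L h
    rw [Function.iterate_succ_apply] at h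
    have h1 := ih (Δ u) L h
    have h2 : Tendsto (fun k => u (k + 1) - p * u k) atTop
        (nhds (L / (1 - p) ^ d)) := by
      rw [hΔ] at h1
      exact h1
    have h3 := key_tendsto p hp u _ h2
    have : L / (1 - p) ^ d / (1 - p) = L / (1 - p) ^ (d + 1) := by
      rw [div_div, pow_succ]
    rwa [this] at h3

theorem steady_state_residual_tracks_attack
    (p : ℝ) (hp : |p| < 1) (d : ℕ) (f : ℝ)
    (c : Fin (d + 1) → ℝ) (hc : ∑ i, c i = -1)
    (Δ : (ℕ → ℝ) → (ℕ → ℝ))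
    (hΔ : Δ = fun u k => u (k + 1) - p * u k)
    (r : ℕ → ℝ)
    (hr : ∀ k : ℕ, (Δ^[d] r) k = -(1 - p) ^ d * (∑ i, c i) * f) :
    Filter.Tendsto r Filter.atTop (nhds f) := by
  have hne : (1:ℝ) - p ≠ 0 := by
    have h2 := (abs_lt.mp hp).2
    intro hcon; linarith
  have hC : ∀ k : ℕ, (Δ^[d] r) k = (1 - p) ^ d * f := by
    intro k; rw [hr k, hc]; ring
  have hconst : Tendsto (Δ^[d] r) atTop (nhds ((1 - p) ^ d * f)) := by
    have : Δ^[d] r = fun _ => (1 - p) ^ d * f := funext hC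
    rw [this]; exact tendsto_const_nhds
  have h := iter_tendsto p hp Δ hΔ d r _ hconst
  have : (1 - p) ^ d * f / (1 - p) ^ d = f := by
    rw [mul_comm, mul_div_assoc, div_self (pow_ne_zero d hne), mul_one]
  rwa [this] at h
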